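/- arXiv:1311.0434 — 3 statements merged into one kernel-verified Lean document; each statement's English description precedes it below -/
import Mathlib

section
/- Let h : ℝ → ℝ be smooth and nonvanishing, g : ℝ → Matrix (Fin 3) (Fin 3) ℝ smooth with g' = A·g and det g(t) = ±1 for all t, and set H = h·g and λ = -h'/h. Then det H'(t) = ∓ h(t)³ · det(A - λ(t)·I₃); in particular H'(t) is invertible if and only if det(A - λ(t)·I₃) ≠ 0. -/
open Matrix
attribute [local instance] Matrix.normedAddCommGroup Matrix.normedSpace

theorem det_deriv_homothetic_motion
    (A : Matrix (Fin 3) (Fin 3) ℝ)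
    (g : ℝ → Matrix (Fin 3) (Fin 3) ℝ)
    (hg : ∀ t, HasDerivAt g (A * g t) t)
    (hdetg : ∀ t, (g t).det = 1 ∨ (g t).det = -1)
    (h h' : ℝ → ℝ) (hh : ∀ t, HasDerivAt h (h' t) t)
    (hh0 : ∀ t, h t ≠ 0)
    (lam : ℝ → ℝ) (hlam : ∀ t, lam t = -(h' t) / h t)
    (t : ℝ) :
    (deriv (fun s => h s • g s) t).det
      = (g t).det * (h t) ^ 3 * (A - lam t • (1 : Matrix (Fin 3) (Fin 3) ℝ)).det ∧
    (IsUnit (deriv (fun s => h s • g s) t) ↔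
      (A - lam t • (1 : Matrix (Fin 3) (Fin 3) ℝ)).det ≠ 0) := by
  have hD : HasDerivAt (fun s => h s • g s) (h t • (A * g t) + h' t • g t) t :=
    (hh t).smul (hg t)
  have hderiv : deriv (fun s => h s • g s) t = h t • (A * g t) + h' t • g t :=
    hD.deriv
  have hlh : lam t * h t = -(h' t) := by
    rw [hlam t, div_mul_cancel₀ _ (hh0 t)]
  have hfac : h t • (A * g t) + h' t • g t
      = (A - lam t • (1 : Matrix (Fin 3) (Fin 3) ℝ)) * (h t • g t) := by
    rw [Matrix.sub_mul, Matrix.smul_mul, Matrix.one_mul, Matrix.mul_smul, smul_smul, hlh]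
    module
  have hdet : (deriv (fun s => h s • g s) t).det
      = (g t).det * (h t) ^ 3 * (A - lam t • (1 : Matrix (Fin 3) (Fin 3) ℝ)).det := by
    rw [hderiv, hfac, Matrix.det_mul, Matrix.det_smul]
    simp [Fintype.card_fin]
    ring
  refine ⟨hdet, ?_⟩
  rw [Matrix.isUnit_iff_isUnit_det, isUnit_iff_ne_zero, hdet]
  have hg0 : (g t).det ≠ 0 := by
    rcases hdetg t with h1 | h1 <;> rw [h1] <;> norm_num
  have hh3 : (h t) ^ 3 ≠ 0 := pow_ne_zero _ (hh0 t)
  constructor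
  · intro H Hc; exact H (by rw [Hc]; ring)
  · intro H
    exact mul_ne_zero (mul_ne_zero hg0 hh3) H
end

section
/- Under the hypotheses H = h·g, g' = A·g, det g = ±1, h ≠ 0, λ = -h'/h: det H''(t) = ∓ h(t)³ · det[(A - λ(t)·I₃)² - λ'(t)·I₃]. Hence H''(t) is invertible iff det[(A - λ(t)·I₃)² - λ'(t)·I₃] ≠ 0. -/
open Matrix
attribute [local instance] Matrix.normedAddCommGroup Matrix.normedSpace

theorem det_second_deriv_homothetic_motion
    (A : Matrix (Fin 3) (Fin 3) ℝ)
    (g : ℝ → Matrix (Fin 3) (Fin 3) ℝ)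
    (hgdiff : Differentiable ℝ g) (hg : ∀ t, deriv g t = A * g t)
    (hdetg : ∀ t, (g t).det = 1 ∨ (g t).det = -1)
    (h : ℝ → ℝ) (hhdiff : Differentiable ℝ h)
    (hhdiff2 : Differentiable ℝ (deriv h))
    (hh0 : ∀ t, h t ≠ 0)
    (lam : ℝ → ℝ) (hlam : ∀ t, lam t = -(deriv h t) / h t)
    (t : ℝ) :
    (deriv (deriv (fun s => h s • g s)) t).det
      = (g t).det * (h t) ^ 3 *
        ((A - lam t • (1 : Matrix (Fin 3) (Fin 3) ℝ)) ^ 2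
          - deriv lam t • (1 : Matrix (Fin 3) (Fin 3) ℝ)).det ∧
    (IsUnit (deriv (deriv (fun s => h s • g s)) t) ↔
      ((A - lam t • (1 : Matrix (Fin 3) (Fin 3) ℝ)) ^ 2
        - deriv lam t • (1 : Matrix (Fin 3) (Fin 3) ℝ)).det ≠ 0) := by
  -- left multiplication by A as a continuous linear map
  set L : Matrix (Fin 3) (Fin 3) ℝ →L[ℝ] Matrix (Fin 3) (Fin 3) ℝ :=
    (LinearMap.mulLeft ℝ A).toContinuousLinearMap with hL
  have hLapp : ∀ X, L X = A * X := fun X => rfl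
  -- derivative of g
  have hgd : ∀ s, HasDerivAt g (A * g s) s := by
    intro s
    exact (hgdiff s).hasDerivAt.congr_deriv (hg s)
  -- derivative of A * g
  have hAgd : ∀ s, HasDerivAt (fun u => A * g u) (A * (A * g s)) s := by
    intro s
    have := (L.hasFDerivAt (x := g s)).comp_hasDerivAt s (hgd s)
    exact this
  -- first derivative of H
  have deriv1 : deriv (fun s => h s • g s) = fun s => h s • (A * g s) + deriv h s • g s := by
    funext s
    exact (((hhdiff s).hasDerivAt).smul (hgd s)).deriv
  -- second derivative of H at t
  have hd2 : deriv (deriv (fun s => h s • g s)) t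
      = (h t • (A * (A * g t)) + deriv h t • (A * g t))
        + (deriv h t • (A * g t) + deriv (deriv h) t • g t) := by
    rw [deriv1]
    have h1 : HasDerivAt (fun s => h s • (A * g s))
        (h t • (A * (A * g t)) + deriv h t • (A * g t)) t :=
      ((hhdiff t).hasDerivAt).smul (hAgd t)
    have h2 : HasDerivAt (fun s => deriv h s • g s)
        (deriv h t • (A * g t) + deriv (deriv h) t • g t) t :=
      ((hhdiff2 t).hasDerivAt).smul (hgd t)
    exact (h1.add h2).deriv
  -- derivative of lam
  have hlamfun : lam = fun s => -(deriv h s) / h s := funext hlam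
  have hlamd : deriv lam t
      = (-(deriv (deriv h) t) * h t - -(deriv h t) * deriv h t) / h t ^ 2 := by
    rw [hlamfun]
    exact ((hhdiff2 t).hasDerivAt.neg.div (hhdiff t).hasDerivAt (hh0 t)).deriv
  -- scalar identities
  have hs1 : h t * (2 * lam t) = -(2 * deriv h t) := by
    rw [hlam t]; field_simp [hh0 t]
  have hs2 : h t * (lam t ^ 2 - deriv lam t) = deriv (deriv h) t := by
    rw [hlam t, hlamd]; field_simp [hh0 t]; ring
  -- the matrix identity
  have key : deriv (deriv (fun s => h s • g s)) t
      = h t • (((A - lam t • (1 : Matrix (Fin 3) (Fin 3) ℝ)) ^ 2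
          - deriv lam t • (1 : Matrix (Fin 3) (Fin 3) ℝ)) * g t) := by
    have expand : ((A - lam t • (1 : Matrix (Fin 3) (Fin 3) ℝ)) ^ 2
          - deriv lam t • (1 : Matrix (Fin 3) (Fin 3) ℝ)) * g t
        = A * (A * g t) - (2 * lam t) • (A * g t)
          + (lam t ^ 2 - deriv lam t) • g t := by
      simp only [sq, sub_mul, mul_sub, smul_mul_assoc, mul_smul_comm, one_mul, mul_one,
        Matrix.mul_assoc, smul_smul, sub_smul, two_mul, add_smul, smul_add, smul_sub, neg_smul]
      module
    rw [hd2, expand, smul_add, smul_sub, smul_smul, smul_smul, hs1, hs2]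
    module
  have hdet : (deriv (deriv (fun s => h s • g s)) t).det
      = (g t).det * (h t) ^ 3 *
        ((A - lam t • (1 : Matrix (Fin 3) (Fin 3) ℝ)) ^ 2
          - deriv lam t • (1 : Matrix (Fin 3) (Fin 3) ℝ)).det := by
    rw [key, Matrix.det_smul, Matrix.det_mul]
    simp [Fintype.card_fin]
    ring
  refine ⟨hdet, ?_⟩
  have hg0 : (g t).det ≠ 0 := by rcases hdetg t with h1 | h1 <;> simp [h1]
  rw [Matrix.isUnit_iff_isUnit_det, isUnit_iff_ne_zero, hdet]
  simp [mul_ne_zero_iff, hg0, pow_ne_zero, hh0 t]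
end

section
/- If h : I → ℝ is twice differentiable and nonvanishing on an open interval I, λ = -h'/h, and λ satisfies λ' = (λ - α)² for a real constant α, then there exist constants c₇, c₈ with h(t) = (c₇ + c₈ t)·e^{-α t} on I. -/
/-- Constancy on a convex set from zero derivative. -/
lemma const_of_deriv_zero {f : ℝ → ℝ} {s : Set ℝ} (hs : Convex ℝ s)
    (hf : ∀ x ∈ s, HasDerivAt f 0 x) {x y : ℝ} (hx : x ∈ s) (hy : y ∈ s) :
    f x = f y := by
  have := hs.norm_image_sub_le_of_norm_hasDerivWithin_le
    (C := 0) (f' := fun _ => (0:ℝ)) (fun z hz => (hf z hz).hasDerivWithinAt)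
    (fun z hz => by simp) hy hx
  simp only [zero_mul] at this
  have : ‖f x - f y‖ ≤ 0 := this
  have := norm_le_zero_iff.mp this
  linarith [sub_eq_zero.mp this]

theorem ode_lam_shift_sq
    (I : Set ℝ) (hIo : IsOpen I) (hIc : I.OrdConnected)
    (α : ℝ) (h h' h'' : ℝ → ℝ)
    (hh0 : ∀ t ∈ I, h t ≠ 0)
    (hh : ∀ t ∈ I, HasDerivAt h (h' t) t)
    (hh' : ∀ t ∈ I, HasDerivAt h' (h'' t) t)
    (lam : ℝ → ℝ) (hlamdef : ∀ t ∈ I, lam t = -(h' t) / h t)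
    (hlam : ∀ t ∈ I, HasDerivAt lam ((lam t - α) ^ 2) t) :
    ∃ c₇ c₈ : ℝ, ∀ t ∈ I, h t = (c₇ + c₈ * t) * Real.exp (-α * t) := by
  rcases I.eq_empty_or_nonempty with hI | ⟨t₀, ht₀⟩
  · exact ⟨0, 0, by simp [hI]⟩
  have hconv : Convex ℝ I := convex_iff_ordConnected.mpr hIc
  -- lam t * h t = -h' t on I
  have hlh : ∀ t ∈ I, lam t * h t = -(h' t) := by
    intro t ht
    rw [hlamdef t ht, div_mul_cancel₀ _ (hh0 t ht)]
  -- key ODE: h'' = -2α h' - α² h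
  have key : ∀ t ∈ I, h'' t = -(2*α) * h' t - α^2 * h t := by
    intro t ht
    have e1 : HasDerivAt (fun s => lam s * h s)
        ((lam t - α)^2 * h t + lam t * h' t) t := (hlam t ht).mul (hh t ht)
    have heq : (fun s => lam s * h s) =ᶠ[nhds t] (fun s => -(h' s)) := by
      filter_upwards [hIo.mem_nhds ht] with s hs using hlh s hs
    have e2 : HasDerivAt (fun s => -(h' s)) ((lam t - α)^2 * h t + lam t * h' t) t :=
      e1.congr_of_eventuallyEq heq.symm
    have e3 : HasDerivAt (fun s => -(h' s)) (-(h'' t)) t := (hh' t ht).neg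
    have huniq : (lam t - α)^2 * h t + lam t * h' t = -(h'' t) := e2.unique e3
    have h2 := hlh t ht
    linear_combination huniq - (lam t - 2*α) * h2
  -- g = h * exp(α t)
  set g : ℝ → ℝ := fun t => h t * Real.exp (α * t) with hgdef
  set g' : ℝ → ℝ := fun t => (h' t + α * h t) * Real.exp (α * t) with hg'def
  have hexp : ∀ t : ℝ, HasDerivAt (fun s => Real.exp (α * s)) (α * Real.exp (α * t)) t := by
    intro t
    have := (Real.hasDerivAt_exp (α * t)).comp t ((hasDerivAt_id t).const_mul α)
    exact this.congr_deriv (by simp only [id_eq, mul_one]; ring)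
  have hg : ∀ t ∈ I, HasDerivAt g (g' t) t := by
    intro t ht
    have := (hh t ht).mul (hexp t)
    exact this.congr_deriv (by simp only [hg'def]; ring)
  have hg' : ∀ t ∈ I, HasDerivAt g' 0 t := by
    intro t ht
    have := ((hh' t ht).add ((hh t ht).const_mul α)).mul (hexp t)
    exact this.congr_deriv (by simp only [Pi.add_apply]; rw [key t ht]; ring)
  -- g' constant
  obtain ⟨c₈⟩ : ∃ c : ℝ, True := ⟨g' t₀, trivial⟩
  have hgc : ∀ t ∈ I, g' t = g' t₀ := fun t ht => const_of_deriv_zero hconv hg' ht ht₀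
  -- g - g' t₀ * t has zero derivative
  have hlin : ∀ t ∈ I, HasDerivAt (fun s => g s - g' t₀ * s) 0 t := by
    intro t ht
    have := (hg t ht).sub ((hasDerivAt_id t).const_mul (g' t₀))
    exact this.congr_deriv (by simp [hgc t ht])
  refine ⟨g t₀ - g' t₀ * t₀, g' t₀, fun t ht => ?_⟩
  have hc : g t - g' t₀ * t = g t₀ - g' t₀ * t₀ := const_of_deriv_zero hconv hlin ht ht₀
  have : g t = (g t₀ - g' t₀ * t₀) + g' t₀ * t := by linarith
  have hE : Real.exp (α * t) ≠ 0 := Real.exp_ne_zero _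
  have := congrArg (· * Real.exp (-α * t)) this
  simp only [hgdef] at this
  rw [mul_assoc, ← Real.exp_add] at this
  simpa using this
end
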